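/- Let U_[k], V_[k] be invertible k×k matrices and U', V' be (n−k)×k matrices, and let M′ be an invertible (n−k)×(n−k) matrix. Consider the n×n block matrix A = [[U_[k]V_[k]ᵀ, U_[k]V'ᵀ], [U'V_[k]ᵀ, M′ + U'V'ᵀ]]. Then the Schur complement of the top-left block satisfies (M′ + U'V'ᵀ) − U'V_[k]ᵀ (U_[k]V_[k]ᵀ)⁻¹ U_[k]V'ᵀ = M′, and consequently s_n(A)⁻¹ ≤ 1/(s_k(U_[k]) s_k(V_[k])) + (1/s_{n−k}(M′)) (1 + s₁(V')/s_k(V_[k])) (1 + s₁(U')/s_k(U_[k])). -/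

import Mathlib

open Matrix
open scoped Matrix.Norms.L2Operator

/-- Operator (spectral) norm of a real matrix; for an invertible square matrix `B`,
`‖B⁻¹‖ = s_min(B)⁻¹` and `‖B‖ = s₁(B)`. -/
noncomputable def opNorm {m n : Type*} [Fintype m] [Fintype n] [DecidableEq n]
    (A : Matrix m n ℝ) : ℝ :=
  ‖LinearMap.toContinuousLinearMap (Matrix.toEuclideanLin A)‖

lemma opNorm_eq {m n : Type*} [Fintype m] [Fintype n] [DecidableEq n]
    (A : Matrix m n ℝ) : opNorm A = ‖A‖ := rfl

section helperssec
variable {m m' p q : Type*} [Fintype m] [Fintype m'] [Fintype p] [Fintype q]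

lemma norm_fromRows_one_zero [DecidableEq m] :
    ‖(fromRows (1 : Matrix m m ℝ) (0 : Matrix m' m ℝ))‖ ≤ 1 := by
  rw [l2_opNorm_def]
  refine ContinuousLinearMap.opNorm_le_bound _ zero_le_one fun x => ?_
  rw [one_mul]
  have h : (LinearEquiv.trans toEuclideanLin LinearMap.toContinuousLinearMap
      (fromRows (1 : Matrix m m ℝ) (0 : Matrix m' m ℝ))) x
      = (WithLp.equiv 2 _).symm (Sum.elim (fun i => x i) (fun _ => (0:ℝ))) := by
    ext i
    cases i <;> simp [toEuclideanLin_apply, fromRows_mulVec, one_mulVec, zero_mulVec,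
      Sum.elim_inl, Sum.elim_inr, WithLp.equiv_symm_apply, PiLp.toLp_apply]
  rw [h, EuclideanSpace.norm_eq, EuclideanSpace.norm_eq]
  apply Real.sqrt_le_sqrt
  rw [Fintype.sum_sum_type]
  simp

lemma norm_fromRows_zero_one [DecidableEq m'] :
    ‖(fromRows (0 : Matrix m m' ℝ) (1 : Matrix m' m' ℝ))‖ ≤ 1 := by
  rw [l2_opNorm_def]
  refine ContinuousLinearMap.opNorm_le_bound _ zero_le_one fun x => ?_
  rw [one_mul]
  have h : (LinearEquiv.trans toEuclideanLin LinearMap.toContinuousLinearMap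
      (fromRows (0 : Matrix m m' ℝ) (1 : Matrix m' m' ℝ))) x
      = (WithLp.equiv 2 _).symm (Sum.elim (fun _ => (0:ℝ)) (fun i => x i)) := by
    ext i
    cases i <;> simp [toEuclideanLin_apply, fromRows_mulVec, one_mulVec, zero_mulVec,
      Sum.elim_inl, Sum.elim_inr, WithLp.equiv_symm_apply, PiLp.toLp_apply]
  rw [h, EuclideanSpace.norm_eq, EuclideanSpace.norm_eq]
  apply Real.sqrt_le_sqrt
  rw [Fintype.sum_sum_type]
  simp

lemma l2norm_transpose [DecidableEq m] [DecidableEq p] (A : Matrix m p ℝ) : ‖Aᵀ‖ = ‖A‖ := by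
  have h : Aᴴ = Aᵀ := by ext i j; simp [conjTranspose_apply]
  rw [← h, l2_opNorm_conjTranspose]

lemma norm_fromRows_le [DecidableEq m] [DecidableEq m'] [DecidableEq p]
    (X : Matrix m p ℝ) (Y : Matrix m' p ℝ) :
    ‖fromRows X Y‖ ≤ ‖X‖ + ‖Y‖ := by
  have h : fromRows X Y = fromRows (1 : Matrix m m ℝ) (0 : Matrix m' m ℝ) * X
      + fromRows (0 : Matrix m m' ℝ) (1 : Matrix m' m' ℝ) * Y := by
    ext i j
    cases i <;> simp [fromRows_mul, Matrix.add_apply, fromRows_apply_inl, fromRows_apply_inr]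
  rw [h]
  refine (norm_add_le _ _).trans (add_le_add ?_ ?_)
  · exact (l2_opNorm_mul _ _).trans (by
      have := norm_fromRows_one_zero (m := m) (m' := m')
      nlinarith [norm_nonneg X, norm_nonneg (fromRows (1 : Matrix m m ℝ) (0 : Matrix m' m ℝ))])
  · exact (l2_opNorm_mul _ _).trans (by
      have := norm_fromRows_zero_one (m := m) (m' := m')
      nlinarith [norm_nonneg Y, norm_nonneg (fromRows (0 : Matrix m m' ℝ) (1 : Matrix m' m' ℝ))])

lemma norm_fromColumns_le [DecidableEq m] [DecidableEq m'] [DecidableEq p]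
    (X : Matrix p m ℝ) (Y : Matrix p m' ℝ) :
    ‖fromCols X Y‖ ≤ ‖X‖ + ‖Y‖ := by
  have h : fromCols X Y = (fromRows Xᵀ Yᵀ)ᵀ := by
    rw [transpose_fromRows, transpose_transpose, transpose_transpose]
  rw [h, l2norm_transpose]
  exact (norm_fromRows_le _ _).trans (by rw [l2norm_transpose, l2norm_transpose])

lemma norm_fromBlocks_le [DecidableEq m] [DecidableEq m'] [DecidableEq p] [DecidableEq q]
    (A : Matrix p m ℝ) (B : Matrix p m' ℝ) (C : Matrix q m ℝ) (D : Matrix q m' ℝ) :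
    ‖fromBlocks A B C D‖ ≤ ‖A‖ + ‖B‖ + ‖C‖ + ‖D‖ := by
  rw [← fromRows_fromCols_eq_fromBlocks]
  refine (norm_fromRows_le _ _).trans ?_
  have h1 := norm_fromColumns_le A B
  have h2 := norm_fromColumns_le C D
  linarith

lemma norm_one_le [DecidableEq m] : ‖(1 : Matrix m m ℝ)‖ ≤ 1 := by
  rw [l2_opNorm_def]
  refine ContinuousLinearMap.opNorm_le_bound _ zero_le_one fun x => ?_
  rw [one_mul]
  have h : (LinearEquiv.trans toEuclideanLin LinearMap.toContinuousLinearMap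
      (1 : Matrix m m ℝ)) x = x := by
    ext i
    simp [toEuclideanLin_apply, one_mulVec, WithLp.equiv_symm_apply, PiLp.toLp_apply]
  rw [h]

end helperssec

/-- For the block matrix `A = [[U_[k]V_[k]ᵀ, U_[k]V′ᵀ],[U′V_[k]ᵀ, M′ + U′V′ᵀ]]` with
`U_[k], V_[k], M′` invertible, the Schur complement of the top-left block is exactly
`M′`, and `sₙ(A)⁻¹ = ‖A⁻¹‖` satisfies the stated bound (with
`s_k(B)⁻¹ = ‖B⁻¹‖` and `s₁(B) = ‖B‖`). -/
theorem stmt17 {n k : ℕ} (Uk Vk : Matrix (Fin k) (Fin k) ℝ)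
    (U' V' : Matrix (Fin (n - k)) (Fin k) ℝ)
    (M' : Matrix (Fin (n - k)) (Fin (n - k)) ℝ)
    (hU : IsUnit Uk) (hV : IsUnit Vk) (hM : IsUnit M') :
    (M' + U' * V'ᵀ) - (U' * Vkᵀ) * (Uk * Vkᵀ)⁻¹ * (Uk * V'ᵀ) = M' ∧
    opNorm (Matrix.fromBlocks (Uk * Vkᵀ) (Uk * V'ᵀ) (U' * Vkᵀ) (M' + U' * V'ᵀ))⁻¹ ≤
      opNorm Uk⁻¹ * opNorm Vk⁻¹ +
        opNorm M'⁻¹ * (1 + opNorm V' * opNorm Vk⁻¹) * (1 + opNorm U' * opNorm Uk⁻¹) := by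
  have hUd : IsUnit Uk.det := (Matrix.isUnit_iff_isUnit_det Uk).mp hU
  have hVd : IsUnit Vk.det := (Matrix.isUnit_iff_isUnit_det Vk).mp hV
  have hMd : IsUnit M'.det := (Matrix.isUnit_iff_isUnit_det M').mp hM
  have hU2 : Uk⁻¹ * Uk = 1 := Matrix.nonsing_inv_mul Uk hUd
  have hV1 : Vk * Vk⁻¹ = 1 := Matrix.mul_nonsing_inv Vk hVd
  have hV2 : Vk⁻¹ * Vk = 1 := Matrix.nonsing_inv_mul Vk hVd
  have hM2 : M'⁻¹ * M' = 1 := Matrix.nonsing_inv_mul M' hMd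
  have hVt1 : Vkᵀ * (Vk⁻¹)ᵀ = 1 := by
    rw [← Matrix.transpose_mul, hV2, Matrix.transpose_one]
  have hVt2 : (Vk⁻¹)ᵀ * Vkᵀ = 1 := by
    rw [← Matrix.transpose_mul, hV1, Matrix.transpose_one]
  have hVtinv : (Vkᵀ)⁻¹ = (Vk⁻¹)ᵀ := (Matrix.transpose_nonsing_inv Vk).symm
  have hc2 : ∀ {p : Type} [Fintype p] (Z : Matrix (Fin k) p ℝ), Uk⁻¹ * (Uk * Z) = Z := by
    intro p _ Z; rw [← Matrix.mul_assoc, hU2, Matrix.one_mul]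
  constructor
  · rw [Matrix.mul_inv_rev, hVtinv]
    have hcan : (U' * Vkᵀ) * ((Vk⁻¹)ᵀ * Uk⁻¹) * (Uk * V'ᵀ) = U' * V'ᵀ := by
      simp only [Matrix.mul_assoc, hc2]
      rw [← Matrix.mul_assoc Vkᵀ, hVt1, Matrix.one_mul]
    rw [hcan, add_sub_cancel_right]
  · set A := Matrix.fromBlocks (Uk * Vkᵀ) (Uk * V'ᵀ) (U' * Vkᵀ) (M' + U' * V'ᵀ) with hA
    set P : Matrix (Fin k) (Fin (n-k)) ℝ := (Vk⁻¹)ᵀ * V'ᵀ with hP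
    set Q : Matrix (Fin (n-k)) (Fin k) ℝ := U' * Uk⁻¹ with hQ
    set Bi : Matrix (Fin k) (Fin k) ℝ := (Vk⁻¹)ᵀ * Uk⁻¹ with hBi
    set X := Matrix.fromBlocks (Bi + P * (M'⁻¹ * Q)) (-(P * M'⁻¹)) (-(M'⁻¹ * Q)) M'⁻¹ with hX
    have e11 : (Bi + P * (M'⁻¹ * Q)) * (Uk * Vkᵀ) + -(P * M'⁻¹) * (U' * Vkᵀ) = 1 := by
      simp only [hBi, hP, hQ, Matrix.add_mul, Matrix.mul_add, Matrix.neg_mul,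
        Matrix.mul_assoc, hc2, hM2, Matrix.mul_one]
      rw [hVt2]; abel
    have e12 : (Bi + P * (M'⁻¹ * Q)) * (Uk * V'ᵀ) + -(P * M'⁻¹) * (M' + U' * V'ᵀ) = 0 := by
      simp only [hBi, hP, hQ, Matrix.add_mul, Matrix.mul_add, Matrix.neg_mul,
        Matrix.mul_assoc, hc2, hM2, Matrix.mul_one]
      abel
    have e21 : -(M'⁻¹ * Q) * (Uk * Vkᵀ) + M'⁻¹ * (U' * Vkᵀ) = 0 := by
      simp only [hQ, Matrix.neg_mul, Matrix.mul_assoc, hc2]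
      abel
    have e22 : -(M'⁻¹ * Q) * (Uk * V'ᵀ) + M'⁻¹ * (M' + U' * V'ᵀ) = 1 := by
      simp only [hQ, Matrix.neg_mul, Matrix.mul_add, Matrix.mul_assoc, hc2, hM2]
      abel
    have hXA : X * A = 1 := by
      rw [hX, hA, Matrix.fromBlocks_multiply, e11, e12, e21, e22, Matrix.fromBlocks_one]
    have hAinv : A⁻¹ = X := Matrix.inv_eq_left_inv hXA
    rw [hAinv]
    simp only [opNorm_eq]
    -- decompose X
    set F1 := Matrix.fromBlocks (0 : Matrix (Fin k) (Fin k) ℝ) (-P) 0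
      (1 : Matrix (Fin (n-k)) (Fin (n-k)) ℝ) with hF1
    set F2 := Matrix.fromBlocks (0 : Matrix (Fin k) (Fin k) ℝ) 0 0 M'⁻¹ with hF2
    set F3 := Matrix.fromBlocks (0 : Matrix (Fin k) (Fin k) ℝ) 0 (-Q)
      (1 : Matrix (Fin (n-k)) (Fin (n-k)) ℝ) with hF3
    have hdecomp : X = Matrix.fromBlocks Bi 0 0 0 + F1 * (F2 * F3) := by
      rw [hF1, hF2, hF3, Matrix.fromBlocks_multiply, Matrix.fromBlocks_multiply, hX]
      simp only [Matrix.zero_mul, Matrix.mul_zero, add_zero, zero_add, Matrix.neg_mul,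
        Matrix.mul_neg, neg_neg, Matrix.one_mul, Matrix.mul_one, Matrix.fromBlocks_add]
      simp [Matrix.mul_assoc]
    have hnBi : ‖Bi‖ ≤ ‖Vk⁻¹‖ * ‖Uk⁻¹‖ := by
      rw [hBi]
      refine (l2_opNorm_mul _ _).trans ?_
      rw [l2norm_transpose]
    have hnP : ‖P‖ ≤ ‖V'‖ * ‖Vk⁻¹‖ := by
      rw [hP]
      refine (l2_opNorm_mul _ _).trans ?_
      rw [l2norm_transpose, l2norm_transpose, mul_comm]
    have hnQ : ‖Q‖ ≤ ‖U'‖ * ‖Uk⁻¹‖ := l2_opNorm_mul _ _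
    have hnF1 : ‖F1‖ ≤ 1 + ‖P‖ := by
      rw [hF1]
      refine (norm_fromBlocks_le _ _ _ _).trans ?_
      have := norm_one_le (m := Fin (n-k))
      simp only [norm_zero, norm_neg]
      linarith
    have hnF2 : ‖F2‖ ≤ ‖M'⁻¹‖ := by
      rw [hF2]
      refine (norm_fromBlocks_le _ _ _ _).trans ?_
      simp
    have hnF3 : ‖F3‖ ≤ 1 + ‖Q‖ := by
      rw [hF3]
      refine (norm_fromBlocks_le _ _ _ _).trans ?_
      have := norm_one_le (m := Fin (n-k))
      simp only [norm_zero, norm_neg]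
      linarith
    have hcorner : ‖Matrix.fromBlocks Bi (0 : Matrix (Fin k) (Fin (n-k)) ℝ)
        (0 : Matrix (Fin (n-k)) (Fin k) ℝ) (0 : Matrix (Fin (n-k)) (Fin (n-k)) ℝ)‖ ≤ ‖Bi‖ := by
      refine (norm_fromBlocks_le _ _ _ _).trans ?_
      simp
    have hmain : ‖X‖ ≤ ‖Bi‖ + ‖F1‖ * (‖F2‖ * ‖F3‖) := by
      rw [hdecomp]
      refine (norm_add_le _ _).trans (add_le_add hcorner ?_)
      refine (l2_opNorm_mul _ _).trans ?_
      have h23 := l2_opNorm_mul F2 F3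
      nlinarith [norm_nonneg F1, norm_nonneg F2, norm_nonneg F3, norm_nonneg (F2 * F3)]
    refine hmain.trans ?_
    have hF1' : ‖F1‖ ≤ 1 + ‖V'‖ * ‖Vk⁻¹‖ := hnF1.trans (by linarith)
    have hF3' : ‖F3‖ ≤ 1 + ‖U'‖ * ‖Uk⁻¹‖ := hnF3.trans (by linarith)
    have h23 : ‖F2‖ * ‖F3‖ ≤ ‖M'⁻¹‖ * (1 + ‖U'‖ * ‖Uk⁻¹‖) :=
      mul_le_mul hnF2 hF3' (norm_nonneg F3) (norm_nonneg (M'⁻¹))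
    have h1 : ‖F1‖ * (‖F2‖ * ‖F3‖) ≤ (1 + ‖V'‖ * ‖Vk⁻¹‖) * (‖M'⁻¹‖ * (1 + ‖U'‖ * ‖Uk⁻¹‖)) :=
      mul_le_mul hF1' h23 (mul_nonneg (norm_nonneg F2) (norm_nonneg F3))
        (by positivity)
    calc ‖Bi‖ + ‖F1‖ * (‖F2‖ * ‖F3‖)
        ≤ ‖Vk⁻¹‖ * ‖Uk⁻¹‖ + (1 + ‖V'‖ * ‖Vk⁻¹‖) * (‖M'⁻¹‖ * (1 + ‖U'‖ * ‖Uk⁻¹‖)) :=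
          add_le_add hnBi h1
      _ = ‖Uk⁻¹‖ * ‖Vk⁻¹‖ + ‖M'⁻¹‖ * (1 + ‖V'‖ * ‖Vk⁻¹‖) * (1 + ‖U'‖ * ‖Uk⁻¹‖) := by ring
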